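/- (Main result) For d ≥ 2 and n ≥ 1, f_d(n) = d · Σ_{k=0}^{n-1} C(n,k) · C(n-1,k) · f_{d-1}(k), where f_d(n) = Σ_{m_1+⋯+m_d=n} (n!/(m_1!⋯m_d!))^2. -/

import Mathlib

open Finset

/-- `f d n = Σ_{m₁+⋯+m_d = n} (n! / (m₁! ⋯ m_d!))²`, the number of abelian squares of
length `n + n` over a `d`-letter alphabet. -/
def f (d n : ℕ) : ℕ :=
  ∑ m ∈ Finset.Nat.antidiagonalTuple d n, (Nat.multinomial Finset.univ m) ^ 2

lemma multinomial_comp_perm {d : ℕ} (σ : Equiv.Perm (Fin d)) (m : Fin d → ℕ) :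
    Nat.multinomial Finset.univ (m ∘ σ) = Nat.multinomial Finset.univ m := by
  unfold Nat.multinomial
  rw [show ∑ i ∈ univ, (m ∘ σ) i = ∑ i, m i from Equiv.sum_comp σ m,
      show ∏ i ∈ univ, Nat.factorial ((m ∘ σ) i) = ∏ i, Nat.factorial (m i) from Equiv.prod_comp σ fun i => Nat.factorial (m i)]

lemma sum_coord_eq {d n : ℕ} (i j : Fin d) :
    ∑ m ∈ Finset.Nat.antidiagonalTuple d n, m i * (Nat.multinomial Finset.univ m) ^ 2
      = ∑ m ∈ Finset.Nat.antidiagonalTuple d n, m j * (Nat.multinomial Finset.univ m) ^ 2 := by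
  refine Finset.sum_nbij' (fun m => m ∘ Equiv.swap i j) (fun m => m ∘ Equiv.swap i j)
    ?_ ?_ ?_ ?_ ?_
  · intro m hm
    rw [Finset.Nat.mem_antidiagonalTuple] at hm ⊢
    rw [show ∑ k, (m ∘ Equiv.swap i j) k = ∑ k, m k from Equiv.sum_comp _ m]
    exact hm
  · intro m hm
    rw [Finset.Nat.mem_antidiagonalTuple] at hm ⊢
    rw [show ∑ k, (m ∘ Equiv.swap i j) k = ∑ k, m k from Equiv.sum_comp _ m]
    exact hm
  · intro m _
    funext k
    simp [Function.comp, Equiv.swap_apply_self]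
  · intro m _
    funext k
    simp [Function.comp, Equiv.swap_apply_self]
  · intro m _
    rw [multinomial_comp_perm]
    simp [Function.comp, Equiv.swap_apply_left]

lemma sum_antidiagonalTuple_succ {M : Type*} [AddCommMonoid M] (e n : ℕ)
    (F : (Fin (e + 1) → ℕ) → M) :
    ∑ m ∈ Finset.Nat.antidiagonalTuple (e + 1) n, F m
      = ∑ p ∈ Finset.HasAntidiagonal.antidiagonal n,
          ∑ t ∈ Finset.Nat.antidiagonalTuple e p.2, F (Fin.cons p.1 t) := by
  rw [Finset.sum_sigma']
  refine Finset.sum_nbij'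
    (fun m => (⟨(m 0, ∑ k, Fin.tail m k), Fin.tail m⟩ : Σ _p : ℕ × ℕ, Fin e → ℕ))
    (fun x => Fin.cons x.1.1 x.2) ?_ ?_ ?_ ?_ ?_
  · intro m hm
    rw [Finset.Nat.mem_antidiagonalTuple] at hm
    rw [Finset.mem_sigma, Finset.HasAntidiagonal.mem_antidiagonal, Finset.Nat.mem_antidiagonalTuple]
    refine ⟨?_, rfl⟩
    rw [← hm, Fin.sum_univ_succ]
    rfl
  · intro x hx
    rw [Finset.mem_sigma, Finset.HasAntidiagonal.mem_antidiagonal, Finset.Nat.mem_antidiagonalTuple] at hx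
    rw [Finset.Nat.mem_antidiagonalTuple, Fin.sum_univ_succ]
    simp only [Fin.cons_zero, Fin.cons_succ]
    rw [hx.2, hx.1]
  · intro m _
    exact Fin.cons_self_tail m
  · intro x hx
    rw [Finset.mem_sigma, Finset.HasAntidiagonal.mem_antidiagonal, Finset.Nat.mem_antidiagonalTuple] at hx
    obtain ⟨⟨a, b⟩, t⟩ := x
    simp only [Fin.cons_zero, Fin.tail_cons]
    have hb : ∑ k, t k = b := hx.2
    subst hb
    rfl
  · intro m _
    rw [Fin.cons_self_tail]

lemma multinomial_fin_cons (e a : ℕ) (t : Fin e → ℕ) :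
    Nat.multinomial Finset.univ (Fin.cons a t)
      = (a + ∑ k, t k).choose a * Nat.multinomial Finset.univ t := by
  rw [Fin.univ_succ, Nat.multinomial_cons]
  congr 1
  · congr 1
    rw [Finset.sum_map]
    simp [Fin.cons_succ]
  · unfold Nat.multinomial
    rw [Finset.sum_map, Finset.prod_map]
    simp [Fin.cons_succ]

theorem abelian_square_recursion (d n : ℕ) (hd : 2 ≤ d) (hn : 1 ≤ n) :
    f d n = d * ∑ k ∈ Finset.range n, n.choose k * (n - 1).choose k * f (d - 1) k := by
  obtain ⟨e, rfl⟩ : ∃ e, d = e + 1 := ⟨d - 1, (Nat.succ_pred_eq_of_pos (by omega)).symm⟩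
  simp only [Nat.add_sub_cancel]
  have key : n * f (e + 1) n
      = (e + 1) * ∑ m ∈ Finset.Nat.antidiagonalTuple (e + 1) n,
          m 0 * (Nat.multinomial Finset.univ m) ^ 2 := by
    rw [f, Finset.mul_sum]
    calc ∑ m ∈ Finset.Nat.antidiagonalTuple (e + 1) n, n * (Nat.multinomial Finset.univ m) ^ 2
        = ∑ m ∈ Finset.Nat.antidiagonalTuple (e + 1) n,
            ∑ i : Fin (e + 1), m i * (Nat.multinomial Finset.univ m) ^ 2 := by
          refine Finset.sum_congr rfl fun m hm => ?_
          rw [← Finset.sum_mul, Finset.Nat.mem_antidiagonalTuple.mp hm]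
      _ = ∑ i : Fin (e + 1), ∑ m ∈ Finset.Nat.antidiagonalTuple (e + 1) n,
            m i * (Nat.multinomial Finset.univ m) ^ 2 := Finset.sum_comm
      _ = ∑ _i : Fin (e + 1), ∑ m ∈ Finset.Nat.antidiagonalTuple (e + 1) n,
            m 0 * (Nat.multinomial Finset.univ m) ^ 2 := by
          exact Finset.sum_congr rfl fun i _ => sum_coord_eq i 0
      _ = (e + 1) * _ := by
          rw [Finset.sum_const, Finset.card_univ, Fintype.card_fin, smul_eq_mul]
  have hS : ∑ m ∈ Finset.Nat.antidiagonalTuple (e + 1) n,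
        m 0 * (Nat.multinomial Finset.univ m) ^ 2
      = ∑ k ∈ Finset.range n, (n - k) * n.choose k ^ 2 * f e k := by
    rw [sum_antidiagonalTuple_succ]
    have h1 : ∀ p ∈ Finset.HasAntidiagonal.antidiagonal n,
        (∑ t ∈ Finset.Nat.antidiagonalTuple e p.2,
            (Fin.cons p.1 t : Fin (e + 1) → ℕ) 0
              * (Nat.multinomial Finset.univ (Fin.cons p.1 t)) ^ 2)
          = p.1 * n.choose p.1 ^ 2 * f e p.2 := by
      intro p hp
      rw [f, Finset.mul_sum]
      refine Finset.sum_congr rfl fun t ht => ?_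
      rw [Fin.cons_zero, multinomial_fin_cons, Finset.Nat.mem_antidiagonalTuple.mp ht,
        Finset.HasAntidiagonal.mem_antidiagonal.mp hp]
      ring
    rw [Finset.sum_congr rfl h1, Finset.Nat.sum_antidiagonal_eq_sum_range_succ_mk,
      ← Finset.sum_range_reflect]
    have h2 : ∀ j ∈ Finset.range (n + 1),
        (n + 1 - 1 - j) * n.choose (n + 1 - 1 - j) ^ 2 * f e (n - (n + 1 - 1 - j))
          = (n - j) * n.choose j ^ 2 * f e j := by
      intro j hj
      have hjn : j ≤ n := Nat.lt_succ_iff.mp (Finset.mem_range.mp hj)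
      rw [show n + 1 - 1 - j = n - j by rw [Nat.add_sub_cancel], Nat.choose_symm hjn,
        Nat.sub_sub_self hjn]
    rw [Finset.sum_congr rfl h2, Finset.sum_range_succ, Nat.sub_self]
    simp
  apply Nat.eq_of_mul_eq_mul_left hn
  rw [key, hS]
  have h3 : ∀ k ∈ Finset.range n,
      (n - k) * n.choose k ^ 2 * f e k = n * (n.choose k * (n - 1).choose k * f e k) := by
    intro k _
    have h : (n - 1).choose k * n = n.choose k * (n - k) := by
      have := Nat.choose_mul_succ_eq (n - 1) k
      rwa [Nat.sub_add_cancel hn] at this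
    calc (n - k) * n.choose k ^ 2 * f e k
        = n.choose k * (n.choose k * (n - k)) * f e k := by ring
      _ = n.choose k * ((n - 1).choose k * n) * f e k := by rw [h]
      _ = n * (n.choose k * (n - 1).choose k * f e k) := by ring
  rw [Finset.sum_congr rfl h3, ← Finset.mul_sum]
  ring
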